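/- arXiv:1101.2480 — 2 statements merged into one kernel-verified Lean document; each statement's English description precedes it below -/
import Mathlib

section
/- Suppose for each i ∈ ℕ we are given n_i ∈ ℕ, a compact subset P_i ⊂ I^{n_i}, δ_i > 0, ε_i > 0, and a map g_i^{i+1} : P_{i+1} → P_i such that: (i) if u, v ∈ Q and ρ(u,v) ≤ ε_{i+1}, then ρ(p_{n_i}(u), p_{n_i}(v)) < δ_i; (ii) n_i < n_{i+1}; (iii) 9/2^{n_i} < ε_i; (iv) ρ(g_i^{i+1}(x), p_{n_i}(x)) < δ_i for all x ∈ P_{i+1}; (v) δ_i < 1/2^{n_i − 1}; (vi) P_{i+1} × Q_{n_{i+1}} ⊂ P_i × Q_{n_i}. Put X = ∩_{i=1}^∞ P_i × Q_{n_i} and Z = lim (P_i, g_i^{i+1}). Then for each thread z = (a_1, a_2, …) ∈ Z ⊂ ∏_{i=1}^∞ P_i, with each a_i regarded as a point of Q: (a) (a_i) is a Cauchy sequence in Q whose limit lies in X, and (b) the function π : Z → X given by π(z) = lim_{i→∞} a_i is continuous. -/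
open Set Topology Filter

noncomputable section

/-! ### The Hilbert cube `Q = ∏_{i=1}^∞ I` realized inside `ℕ → ℝ` -/

/-- The ambient space `ℝ^∞` containing the Hilbert cube. -/
abbrev ESp : Type := ℕ → ℝ

/-- The metric `ρ(x, y) = ∑_{i=1}^∞ |x_i - y_i| / 2^i` on the Hilbert cube. -/
noncomputable def rho (x y : ESp) : ℝ := ∑' i : ℕ, |x i - y i| / 2 ^ (i + 1)

/-- The coordinate projection `p_n : Q → I^n` (followed by the identification of
`I^n` with the slice `I^n × {0} ⊆ Q`). -/
def proj (n : ℕ) (x : ESp) : ESp := fun j => if j < n then x j else 0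

/-- The Hilbert cube `Q`. -/
def HCube : Set ESp := {x | ∀ i, x i ∈ Set.Icc (0 : ℝ) 1}

/-- The slice `I^n × {0} ⊆ Q`, the canonical copy of `I^n` in `Q`. -/
def cubeSlice (n : ℕ) : Set ESp := {x ∈ HCube | ∀ j, n ≤ j → x j = 0}

/-- `P × Q_n ⊆ Q = I^n × Q_n`, for a subset `P` of the slice `I^n × {0}`. -/
def tube (P : Set ESp) (n : ℕ) : Set ESp := {x ∈ HCube | proj n x ∈ P}

/-- The data and hypotheses (i)–(vi) of the inverse-sequence setup of Lemma 3.1. -/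
structure InvSeqSetup where
  n : ℕ → ℕ
  P : ℕ → Set ESp
  δ : ℕ → ℝ
  ε : ℕ → ℝ
  /-- the bonding maps `g_i^{i+1} : P_{i+1} → P_i` -/
  g : ℕ → ESp → ESp
  P_sub : ∀ i, P i ⊆ cubeSlice (n i)
  P_cpt : ∀ i, IsCompact (P i)
  δ_pos : ∀ i, 0 < δ i
  ε_pos : ∀ i, 0 < ε i
  g_maps : ∀ i, Set.MapsTo (g i) (P (i + 1)) (P i)
  g_cont : ∀ i, ContinuousOn (g i) (P (i + 1))
  /-- (i) -/
  hyp1 : ∀ i, ∀ u ∈ HCube, ∀ v ∈ HCube,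
    rho u v ≤ ε (i + 1) → rho (proj (n i) u) (proj (n i) v) < δ i
  /-- (ii) -/
  hyp2 : ∀ i, n i < n (i + 1)
  /-- (iii) -/
  hyp3 : ∀ i, 9 / 2 ^ n i < ε i
  /-- (iv) -/
  hyp4 : ∀ i, ∀ x ∈ P (i + 1), rho (g i x) (proj (n i) x) < δ i
  /-- (v) -/
  hyp5 : ∀ i, δ i < 1 / 2 ^ (n i - 1)
  /-- (vi) -/
  hyp6 : ∀ i, tube (P (i + 1)) (n (i + 1)) ⊆ tube (P i) (n i)

namespace InvSeqSetup

/-- `X = ∩_{i=1}^∞ P_i × Q_{n_i}`. -/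
def X (S : InvSeqSetup) : Set ESp := ⋂ i, tube (S.P i) (S.n i)

/-- `Z = lim (P_i, g_i^{i+1})`: the space of threads of the inverse sequence. -/
abbrev Thread (S : InvSeqSetup) : Type :=
  {a : ℕ → ESp // (∀ i, a i ∈ S.P i) ∧ ∀ i, S.g i (a (i + 1)) = a i}

/-- `π : Z → X` is the limit map, `π(z) = lim_{i→∞} a_i` for a thread `z = (a_i)`. -/
def IsLimitMap (S : InvSeqSetup) (π : S.Thread → ESp) : Prop :=
  ∀ z : S.Thread, Filter.Tendsto (fun i => rho (z.1 i) (π z)) Filter.atTop (nhds 0)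

/-- `B_{x,i} = N̄(p_{n_i}(x), 2δ_i) ∩ P_i`. -/
def B (S : InvSeqSetup) (x : ESp) (i : ℕ) : Set ESp :=
  {y ∈ cubeSlice (S.n i) | rho y (proj (S.n i) x) ≤ 2 * S.δ i} ∩ S.P i

/-- `B^#_{x,i} = N̄(p_{n_i}(x), ε_i) ∩ P_i`. -/
def Bs (S : InvSeqSetup) (x : ESp) (i : ℕ) : Set ESp :=
  {y ∈ cubeSlice (S.n i) | rho y (proj (S.n i) x) ≤ S.ε i} ∩ S.P i

end InvSeqSetup

end


/- ### auxiliary lemmas -/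

section Aux

lemma abs_sub_le_one_of_mem {x y : ESp} (hx : x ∈ HCube) (hy : y ∈ HCube) (i : ℕ) :
    |x i - y i| ≤ 1 := by
  have hx' := hx i
  have hy' := hy i
  simp only [Set.mem_Icc] at hx' hy'
  rw [abs_sub_le_iff]
  constructor <;> linarith [hx'.1, hx'.2, hy'.1, hy'.2]

lemma summable_geo_half : Summable (fun i : ℕ => (1/2 : ℝ) ^ (i + 1)) := by
  simpa [pow_succ] using summable_geometric_two.mul_right (1/2 : ℝ)

lemma rho_term_le {x y : ESp} (hx : x ∈ HCube) (hy : y ∈ HCube) (i : ℕ) :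
    |x i - y i| / 2 ^ (i + 1) ≤ (1/2 : ℝ) ^ (i + 1) := by
  rw [one_div_pow]
  gcongr
  exact abs_sub_le_one_of_mem hx hy i

lemma summable_rho {x y : ESp} (hx : x ∈ HCube) (hy : y ∈ HCube) :
    Summable (fun i => |x i - y i| / 2 ^ (i + 1)) :=
  Summable.of_nonneg_of_le (fun i => by positivity) (rho_term_le hx hy) summable_geo_half

lemma rho_nonneg (x y : ESp) : 0 ≤ rho x y :=
  tsum_nonneg fun i => by positivity

lemma rho_symm (x y : ESp) : rho x y = rho y x :=
  tsum_congr fun i => by rw [abs_sub_comm]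

lemma rho_self (x : ESp) : rho x x = 0 := by simp [rho]

lemma rho_triangle {x y z : ESp} (hx : x ∈ HCube) (hy : y ∈ HCube) (hz : z ∈ HCube) :
    rho x z ≤ rho x y + rho y z := by
  have hxy := summable_rho hx hy
  have hyz := summable_rho hy hz
  have hle : ∀ i, |x i - z i| / 2 ^ (i+1) ≤
      |x i - y i| / 2 ^ (i+1) + |y i - z i| / 2 ^ (i+1) := by
    intro i
    rw [← add_div]
    gcongr
    exact abs_sub_le _ _ _
  calc rho x z ≤ ∑' i, (|x i - y i| / 2 ^ (i+1) + |y i - z i| / 2 ^ (i+1)) :=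
        Summable.tsum_le_tsum hle (summable_rho hx hz) (hxy.add hyz)
    _ = rho x y + rho y z := Summable.tsum_add hxy hyz

lemma proj_mem_HCube {x : ESp} (hx : x ∈ HCube) (n : ℕ) : proj n x ∈ HCube := by
  intro i
  simp only [proj]
  split_ifs with h
  · exact hx i
  · simp

lemma proj_eq_self {n : ℕ} {x : ESp} (hx : x ∈ cubeSlice n) : proj n x = x := by
  funext j
  simp only [proj]
  split_ifs with h
  · rfl
  · exact (hx.2 j (not_lt.1 h)).symm

lemma tsum_tail_half (n : ℕ) :
    ∑' j : ℕ, (if j < n then 0 else (1/2 : ℝ) ^ (j + 1)) = (1/2 : ℝ) ^ n := by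
  have hs : Summable (fun j : ℕ => if j < n then 0 else (1/2 : ℝ) ^ (j + 1)) := by
    apply Summable.of_nonneg_of_le (fun i => by positivity) (fun i => ?_) summable_geo_half
    split_ifs
    · positivity
    · exact le_rfl
  have key := Summable.sum_add_tsum_nat_add n hs
  have h1 : ∑ i ∈ Finset.range n, (if i < n then 0 else (1/2:ℝ)^(i+1)) = 0 :=
    Finset.sum_eq_zero fun i hi => by simp [Finset.mem_range.1 hi]
  have h2 : ∑' i : ℕ, (if (i + n) < n then 0 else (1/2:ℝ)^((i + n)+1)) = (1/2:ℝ)^n := by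
    have he : ∀ i : ℕ, (if (i + n) < n then 0 else (1/2:ℝ)^((i + n)+1))
        = (1/2:ℝ)^i * (1/2:ℝ)^(n+1) := by
      intro i
      rw [if_neg (by omega), ← pow_add]
      ring_nf
    rw [tsum_congr he, tsum_mul_right,
      tsum_geometric_of_lt_one (by norm_num) (by norm_num)]
    rw [pow_succ]
    norm_num
    ring
  rw [← key, h1, h2, zero_add]

lemma rho_proj_le {x : ESp} (hx : x ∈ HCube) (n : ℕ) :
    rho x (proj n x) ≤ (1/2 : ℝ) ^ n := by
  have hterm : ∀ j, |x j - proj n x j| / 2 ^ (j+1) ≤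
      (if j < n then 0 else (1/2 : ℝ) ^ (j + 1)) := by
    intro j
    by_cases h : j < n
    · simp [proj, h]
    · simp only [proj, if_neg h]
      rw [sub_zero, abs_of_nonneg (hx j).1, one_div_pow]
      gcongr
      exact (hx j).2
  have hs : Summable (fun j : ℕ => if j < n then 0 else (1/2 : ℝ) ^ (j + 1)) := by
    apply Summable.of_nonneg_of_le (fun i => by positivity) (fun i => ?_) summable_geo_half
    split_ifs
    · positivity
    · exact le_rfl
  calc rho x (proj n x) ≤ ∑' j : ℕ, (if j < n then 0 else (1/2 : ℝ) ^ (j + 1)) :=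
        Summable.tsum_le_tsum hterm (summable_rho hx (proj_mem_HCube hx n)) hs
    _ = (1/2 : ℝ) ^ n := tsum_tail_half n

end Aux

namespace InvSeqSetup
variable (S : InvSeqSetup)

lemma n_ge (i : ℕ) : i ≤ S.n i :=
  (strictMono_nat_of_lt_succ S.hyp2).le_apply

lemma thread_mem_slice (z : S.Thread) (i : ℕ) : z.1 i ∈ cubeSlice (S.n i) :=
  S.P_sub i (z.2.1 i)

lemma thread_mem_HCube (z : S.Thread) (i : ℕ) : z.1 i ∈ HCube :=
  (thread_mem_slice S z i).1

lemma thread_step (z : S.Thread) (i : ℕ) :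
    rho (z.1 i) (z.1 (i + 1)) ≤ 3 * (1/2 : ℝ) ^ i := by
  have ha1 : z.1 (i+1) ∈ HCube := thread_mem_HCube S z (i+1)
  have ha0 : z.1 i ∈ HCube := thread_mem_HCube S z i
  have hproj : proj (S.n i) (z.1 (i+1)) ∈ HCube := proj_mem_HCube ha1 _
  have h1 : rho (z.1 i) (proj (S.n i) (z.1 (i+1))) < S.δ i := by
    rw [← z.2.2 i]; exact S.hyp4 i _ (z.2.1 (i+1))
  have h2 : rho (proj (S.n i) (z.1 (i+1))) (z.1 (i+1)) ≤ (1/2 : ℝ) ^ (S.n i) := by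
    rw [rho_symm]; exact rho_proj_le ha1 _
  have htri := rho_triangle ha0 hproj ha1
  have hδ : S.δ i ≤ 2 * (1/2 : ℝ) ^ (S.n i) := by
    have h5 := S.hyp5 i
    have hle : (1:ℝ) / 2 ^ (S.n i - 1) ≤ 2 * (1/2 : ℝ) ^ (S.n i) := by
      rw [one_div_pow, mul_one_div]
      rw [div_le_div_iff₀ (by positivity) (by positivity)]
      have : (2:ℝ) ^ (S.n i) ≤ 2 ^ (S.n i - 1 + 1) :=
        pow_le_pow_right₀ (by norm_num) (by omega)
      rw [pow_succ] at this
      linarith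
    linarith
  have hpow : (1/2 : ℝ) ^ (S.n i) ≤ (1/2 : ℝ) ^ i :=
    pow_le_pow_of_le_one (by norm_num) (by norm_num) (S.n_ge i)
  linarith

lemma thread_chain (z : S.Thread) (m l : ℕ) (h : m ≤ l) :
    rho (z.1 m) (z.1 l) ≤ 6 * (1/2 : ℝ) ^ m - 6 * (1/2 : ℝ) ^ l := by
  induction l with
  | zero =>
    have hm : m = 0 := by omega
    subst hm
    simp [rho_self]
  | succ l ih =>
    rcases Nat.lt_succ_iff_lt_or_eq.1 (Nat.lt_succ_of_le h) with h' | h'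
    · have hml : m ≤ l := by omega
      have h1 := ih hml
      have h2 := thread_step S z l
      have htri := rho_triangle (thread_mem_HCube S z m) (thread_mem_HCube S z l)
        (thread_mem_HCube S z (l+1))
      have : (6 : ℝ) * (1/2)^(l+1) = 3 * (1/2)^l := by rw [pow_succ]; ring
      linarith
    · subst h'
      simp [rho_self]

lemma thread_bound (z : S.Thread) (m l : ℕ) :
    rho (z.1 m) (z.1 l) ≤ 6 * (1/2 : ℝ) ^ (min m l) := by
  rcases le_total m l with h | h
  · rw [min_eq_left h]
    have := thread_chain S z m l h
    have hp : (0:ℝ) ≤ (1/2:ℝ)^l := by positivity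
    linarith
  · rw [min_eq_right h, rho_symm]
    have := thread_chain S z l m h
    have hp : (0:ℝ) ≤ (1/2:ℝ)^m := by positivity
    linarith

lemma coord_bound (z : S.Thread) (j m l : ℕ) :
    |z.1 m j - z.1 l j| ≤ 2 ^ (j + 1) * (6 * (1/2 : ℝ) ^ (min m l)) := by
  have hs := summable_rho (thread_mem_HCube S z m) (thread_mem_HCube S z l)
  have h1 : |z.1 m j - z.1 l j| / 2 ^ (j+1) ≤ 6 * (1/2 : ℝ) ^ (min m l) :=
    le_trans (Summable.le_tsum hs j (fun k _ => by positivity)) (thread_bound S z m l)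
  rw [div_le_iff₀ (by positivity)] at h1
  linarith [h1, mul_comm ((6:ℝ) * (1/2:ℝ)^(min m l)) ((2:ℝ)^(j+1))]

lemma pow_bound_tendsto (c : ℝ) :
    Tendsto (fun N : ℕ => c * (6 * (1/2 : ℝ) ^ N)) atTop (𝓝 0) := by
  have h := tendsto_pow_atTop_nhds_zero_of_lt_one (show (0:ℝ) ≤ 1/2 by norm_num)
    (show (1/2:ℝ) < 1 by norm_num)
  simpa using (h.const_mul (6:ℝ)).const_mul c

lemma coord_cauchy (z : S.Thread) (j : ℕ) : CauchySeq (fun i => z.1 i j) := by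
  apply cauchySeq_of_le_tendsto_0 (fun N => 2 ^ (j+1) * (6 * (1/2 : ℝ) ^ N))
  · intro a b N ha hb
    rw [Real.dist_eq]
    refine (coord_bound S z j a b).trans ?_
    have : (1/2 : ℝ) ^ (min a b) ≤ (1/2 : ℝ) ^ N :=
      pow_le_pow_of_le_one (by norm_num) (by norm_num) (le_min ha hb)
    have h2 : (0:ℝ) < 2 ^ (j+1) := by positivity
    nlinarith
  · exact pow_bound_tendsto _

noncomputable def limFun (z : S.Thread) : ESp := fun j => limUnder atTop (fun i => z.1 i j)

lemma coord_tendsto (z : S.Thread) (j : ℕ) :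
    Tendsto (fun i => z.1 i j) atTop (𝓝 (S.limFun z j)) :=
  (coord_cauchy S z j).tendsto_limUnder

lemma limFun_mem_HCube (z : S.Thread) : S.limFun z ∈ HCube := by
  intro j
  constructor
  · exact ge_of_tendsto' (coord_tendsto S z j) fun i => (thread_mem_HCube S z i j).1
  · exact le_of_tendsto' (coord_tendsto S z j) fun i => (thread_mem_HCube S z i j).2

lemma coord_lim_bound (z : S.Thread) (j m : ℕ) :
    |z.1 m j - S.limFun z j| ≤ 2 ^ (j + 1) * (6 * (1/2 : ℝ) ^ m) := by
  have ht : Tendsto (fun l => |z.1 m j - z.1 l j|) atTop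
      (𝓝 (|z.1 m j - S.limFun z j|)) := ((coord_tendsto S z j).const_sub _).abs
  apply le_of_tendsto ht
  filter_upwards [eventually_ge_atTop m] with l hl
  have := coord_bound S z j m l
  rwa [min_eq_left hl] at this

lemma rho_lim_le (z : S.Thread) (m : ℕ) :
    rho (z.1 m) (S.limFun z) ≤ 6 * (1/2 : ℝ) ^ m := by
  have hL := limFun_mem_HCube S z
  have hm := thread_mem_HCube S z m
  apply Summable.tsum_le_of_sum_le (summable_rho hm hL)
  intro F
  have htend : Tendsto (fun l => ∑ j ∈ F, |z.1 m j - z.1 l j| / 2 ^ (j+1)) atTop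
      (𝓝 (∑ j ∈ F, |z.1 m j - S.limFun z j| / 2 ^ (j+1))) := by
    apply tendsto_finset_sum
    intro j _
    exact (((coord_tendsto S z j).const_sub _).abs).div_const _
  apply le_of_tendsto htend
  filter_upwards [eventually_ge_atTop m] with l hl
  calc ∑ j ∈ F, |z.1 m j - z.1 l j| / 2 ^ (j+1)
      ≤ rho (z.1 m) (z.1 l) :=
        Summable.sum_le_tsum F (fun j _ => by positivity)
          (summable_rho hm (thread_mem_HCube S z l))
    _ ≤ 6 * (1/2 : ℝ) ^ (min m l) := thread_bound S z m l
    _ = 6 * (1/2 : ℝ) ^ m := by rw [min_eq_left hl]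

lemma tube_antitone {i k : ℕ} (h : i ≤ k) :
    tube (S.P k) (S.n k) ⊆ tube (S.P i) (S.n i) := by
  induction k with
  | zero =>
    have : i = 0 := by omega
    subst this; exact subset_rfl
  | succ k ih =>
    rcases Nat.lt_succ_iff_lt_or_eq.1 (Nat.lt_succ_of_le h) with h' | h'
    · exact subset_trans (S.hyp6 k) (ih (by omega))
    · subst h'; exact subset_rfl

lemma thread_mem_tube (z : S.Thread) (k : ℕ) : z.1 k ∈ tube (S.P k) (S.n k) := by
  refine ⟨thread_mem_HCube S z k, ?_⟩
  rw [proj_eq_self (thread_mem_slice S z k)]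
  exact z.2.1 k

lemma limFun_mem_X (z : S.Thread) : S.limFun z ∈ S.X := by
  rw [X, Set.mem_iInter]
  intro i
  refine ⟨limFun_mem_HCube S z, ?_⟩
  have hclosed : IsClosed (S.P i) := (S.P_cpt i).isClosed
  have htendproj : Tendsto (fun k => proj (S.n i) (z.1 k)) atTop
      (𝓝 (proj (S.n i) (S.limFun z))) := by
    rw [tendsto_pi_nhds]
    intro j
    simp only [proj]
    split_ifs with h
    · exact coord_tendsto S z j
    · exact tendsto_const_nhds
  apply hclosed.mem_of_tendsto htendproj
  filter_upwards [eventually_ge_atTop i] with k hk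
  exact (S.tube_antitone hk (thread_mem_tube S z k)).2

lemma rho_lim_tendsto (z : S.Thread) :
    Tendsto (fun i => rho (z.1 i) (S.limFun z)) atTop (𝓝 0) := by
  apply squeeze_zero (fun i => rho_nonneg _ _) (fun i => rho_lim_le S z i)
  simpa using pow_bound_tendsto 1

lemma limFun_continuous : Continuous (S.limFun) := by
  apply continuous_pi
  intro j
  have h : TendstoUniformly (fun m (z : S.Thread) => z.1 m j)
      (fun z => S.limFun z j) atTop := by
    rw [Metric.tendstoUniformly_iff]
    intro e he
    obtain ⟨N, hN⟩ : ∃ N : ℕ, 2 ^ (j+1) * (6 * (1/2 : ℝ) ^ N) < e :=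
      ((pow_bound_tendsto ((2:ℝ)^(j+1))).eventually (gt_mem_nhds he)).exists
    filter_upwards [eventually_ge_atTop N] with m hm z
    rw [Real.dist_eq]
    have hb : (1/2 : ℝ) ^ m ≤ (1/2 : ℝ) ^ N :=
      pow_le_pow_of_le_one (by norm_num) (by norm_num) hm
    have h2 : (0:ℝ) < 2 ^ (j+1) := by positivity
    calc |S.limFun z j - z.1 m j| = |z.1 m j - S.limFun z j| := abs_sub_comm _ _
      _ ≤ 2 ^ (j+1) * (6 * (1/2 : ℝ) ^ m) := coord_lim_bound S z j m
      _ ≤ 2 ^ (j+1) * (6 * (1/2 : ℝ) ^ N) := by nlinarith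
      _ < e := hN
  apply h.continuous
  refine Filter.Eventually.frequently (Filter.Eventually.of_forall ?_)
  intro m
  exact (continuous_apply j).comp ((continuous_apply m).comp continuous_subtype_val)

end InvSeqSetup

/-- Lemma 3.1 (a), (b): under hypotheses (i)–(vi), every thread
`z = (a_1, a_2, …) ∈ Z` is a Cauchy sequence in `(Q, ρ)` whose limit lies in `X`, and the
resulting limit function `π : Z → X` is continuous. -/
theorem statement2 (S : InvSeqSetup) :
    (∀ z : S.Thread,
      (∀ e : ℝ, 0 < e → ∃ N : ℕ, ∀ m ≥ N, ∀ l ≥ N, rho (z.1 m) (z.1 l) < e) ∧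
      ∃ L ∈ S.X, Filter.Tendsto (fun i => rho (z.1 i) L) Filter.atTop (nhds 0)) ∧
    ∃ π : S.Thread → ESp,
      S.IsLimitMap π ∧ (∀ z : S.Thread, π z ∈ S.X) ∧ Continuous π := by
  constructor
  · intro z
    constructor
    · intro e he
      obtain ⟨N, hN⟩ : ∃ N : ℕ, (1/2 : ℝ) ^ N < e / 6 :=
        exists_pow_lt_of_lt_one (by linarith) (by norm_num)
      refine ⟨N, fun m hm l hl => ?_⟩
      have h1 := S.thread_bound z m l
      have h2 : (1/2 : ℝ) ^ (min m l) ≤ (1/2 : ℝ) ^ N :=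
        pow_le_pow_of_le_one (by norm_num) (by norm_num) (le_min hm hl)
      linarith
    · exact ⟨S.limFun z, S.limFun_mem_X z, S.rho_lim_tendsto z⟩
  · exact ⟨S.limFun, fun z => S.rho_lim_tendsto z,
      fun z => S.limFun_mem_X z, S.limFun_continuous⟩
end

section
/- Under the hypotheses (i)–(vi) of the inverse-sequence setup (data n_i, P_i ⊂ I^{n_i}, δ_i, ε_i, g_i^{i+1} : P_{i+1} → P_i, with X = ∩_{i=1}^∞ P_i × Q_{n_i}), fix x ∈ X and for each i ∈ ℕ let B_{x,i} = N̄(p_{n_i}(x), 2δ_i) ∩ P_i and B^#_{x,i} = N̄(p_{n_i}(x), ε_i) ∩ P_i. Then B_{x,i} ⊂ B^#_{x,i} and g_i^{i+1}(B^#_{x,i+1}) ⊂ B_{x,i}. -/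
open Set Topology Filter

/-! auxiliary lemmas -/

lemma cubeSlice_subset_HCube (n : ℕ) : cubeSlice n ⊆ HCube := fun _ h => h.1

lemma proj_proj {n m : ℕ} (h : n ≤ m) (x : ESp) : proj n (proj m x) = proj n x := by
  funext j
  simp only [proj]
  split_ifs with h1 h2 <;> try rfl
  omega

lemma summable_rho_aux {x y : ESp} (hx : x ∈ HCube) (hy : y ∈ HCube) :
    Summable (fun i : ℕ => |x i - y i| / 2 ^ (i + 1)) := by
  have hs : Summable (fun i : ℕ => ((1:ℝ)/2) ^ (i + 1)) := by
    have := (summable_geometric_of_lt_one (by norm_num : (0:ℝ) ≤ 1/2) (by norm_num)).mul_left (1/2 : ℝ)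
    simpa [pow_succ, mul_comm] using this
  refine Summable.of_nonneg_of_le (fun i => by positivity) (fun i => ?_) hs
  have h1 : |x i - y i| ≤ 1 := by
    have hx' := hx i; have hy' := hy i
    rw [abs_sub_le_iff]
    constructor <;> [linarith [hx'.2, hy'.1]; linarith [hy'.2, hx'.1]]
  rw [div_pow, one_pow]
  exact div_le_div_of_nonneg_right h1 (by positivity) |>.trans_eq rfl

/-- Lemma 3.1 (c): for `x ∈ X`, the balls
`B_{x,i} = N̄(p_{n_i}(x), 2δ_i) ∩ P_i` and `B^#_{x,i} = N̄(p_{n_i}(x), ε_i) ∩ P_i` satisfy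
`B_{x,i} ⊆ B^#_{x,i}` and `g_i^{i+1}(B^#_{x,i+1}) ⊆ B_{x,i}`. -/
theorem statement3 (S : InvSeqSetup) (x : ESp) (hx : x ∈ S.X) (i : ℕ) :
    S.B x i ⊆ S.Bs x i ∧ Set.MapsTo (S.g i) (S.Bs x (i + 1)) (S.B x i) := by
  have hxH : x ∈ HCube := by
    have := Set.mem_iInter.mp hx 0
    exact this.1
  have hxP : ∀ j, proj (S.n j) x ∈ HCube := fun j => proj_mem_HCube hxH _
  -- 2 δ i ≤ ε i
  have hδε : 2 * S.δ i ≤ S.ε i := by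
    have h5 := S.hyp5 i
    have h3 := S.hyp3 i
    have key : 2 * (1 / 2 ^ (S.n i - 1) : ℝ) ≤ 9 / 2 ^ (S.n i) := by
      rcases Nat.eq_zero_or_pos (S.n i) with h | h
      · simp [h]; norm_num
      · obtain ⟨m, hm⟩ : ∃ m, S.n i = m + 1 := ⟨S.n i - 1, (Nat.succ_pred_eq_of_pos h).symm⟩
        rw [hm]
        simp only [Nat.add_sub_cancel, pow_succ]
        have hp : (0:ℝ) < 2 ^ m := pow_pos (by norm_num) m
        rw [mul_one_div, div_le_div_iff₀ hp (by positivity)]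
        nlinarith
    nlinarith [S.δ_pos i]
  constructor
  · rintro y ⟨⟨hyS, hyρ⟩, hyP⟩
    exact ⟨⟨hyS, hyρ.trans hδε⟩, hyP⟩
  · rintro y ⟨⟨hyS, hyρ⟩, hyP⟩
    have hgP : S.g i y ∈ S.P i := S.g_maps i hyP
    have hgS : S.g i y ∈ cubeSlice (S.n i) := S.P_sub i hgP
    refine ⟨⟨hgS, ?_⟩, hgP⟩
    have hyH : y ∈ HCube := (S.P_sub (i+1) hyP).1
    -- hyp1 applied to u = y, v = proj (n (i+1)) x
    have h1 : rho (proj (S.n i) y) (proj (S.n i) x) < S.δ i := by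
      have := S.hyp1 i y hyH (proj (S.n (i+1)) x) (hxP (i+1)) hyρ
      rwa [proj_proj (le_of_lt (S.hyp2 i))] at this
    have h4 : rho (S.g i y) (proj (S.n i) y) < S.δ i := S.hyp4 i y hyP
    have htri : rho (S.g i y) (proj (S.n i) x) ≤
        rho (S.g i y) (proj (S.n i) y) + rho (proj (S.n i) y) (proj (S.n i) x) :=
      rho_triangle (cubeSlice_subset_HCube _ hgS) (proj_mem_HCube hyH _) (hxP i)
    linarith
end
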